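/- Let p be an odd prime, let K be a field extension of 𝔽_p, and let t ∈ K be transcendental over 𝔽_p. Let n, c ∈ ℕ and set N = p^n + p^{n+c}. Suppose u, v ∈ K and ε₁, ε₂, ε₃ ∈ {1, −1} satisfy (u+1)(v+1) = ε₁·(t+1)^N, u·v = ε₂·t^N, and (u−1)(v−1) = ε₃·(t−1)^N. Then ε₁ = ε₂ = ε₃ = 1 and {u, v} = {t^{p^n}, t^{p^{n+c}}} (i.e., either u = t^{p^n} and v = t^{p^{n+c}}, or u = t^{p^{n+c}} and v = t^{p^n}). -/

import Mathlib

open Polynomial in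
lemma aux18 {p : ℕ} [Fact p.Prime] {K : Type*} [Field K] [Algebra (ZMod p) K]
    {t : K} (ht : Transcendental (ZMod p) t) (n c : ℕ) (A B D : ZMod p)
    (h : algebraMap (ZMod p) K A * t ^ (p ^ n + p ^ (n + c))
        - algebraMap (ZMod p) K B * t ^ p ^ n - algebraMap (ZMod p) K B * t ^ p ^ (n + c)
        + algebraMap (ZMod p) K D = 0) : A = 0 ∧ D = 0 := by
  have hp : p.Prime := Fact.out
  have hpos1 : 0 < p ^ n := pow_pos hp.pos n
  have hpos2 : 0 < p ^ (n + c) := pow_pos hp.pos (n + c)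
  set P : Polynomial (ZMod p) :=
    C A * X ^ (p ^ n + p ^ (n + c)) - C B * X ^ p ^ n - C B * X ^ (p ^ (n + c)) + C D with hPdef
  have hev : Polynomial.aeval t P = 0 := by
    simp only [hPdef, map_add, map_sub, map_mul, map_pow, Polynomial.aeval_X,
      Polynomial.aeval_C]
    exact h
  have hP0 : P = 0 := by
    by_contra h0
    exact ht ⟨P, h0, hev⟩
  have hne1 : p ^ n ≠ p ^ n + p ^ (n + c) := by omega
  have hne2 : p ^ (n + c) ≠ p ^ n + p ^ (n + c) := by omega
  have hne3 : p ^ n + p ^ (n + c) ≠ 0 := by omega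
  have e1 : P.coeff (p ^ n + p ^ (n + c)) = A := by
    rw [hPdef]
    simp only [coeff_add, coeff_sub, coeff_C_mul, coeff_X_pow, coeff_C]
    rw [if_neg (by omega : ¬(p ^ n + p ^ (n + c) = p ^ n)),
      if_neg (by omega : ¬(p ^ n + p ^ (n + c) = p ^ (n + c))),
      if_neg (by omega : ¬(p ^ n + p ^ (n + c) = 0))]
    simp
  have e2 : P.coeff 0 = D := by
    rw [hPdef]
    simp only [coeff_add, coeff_sub, coeff_C_mul, coeff_X_pow, coeff_C]
    rw [if_neg (by omega : ¬((0 : ℕ) = p ^ n + p ^ (n + c))),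
      if_neg (by omega : ¬((0 : ℕ) = p ^ n)),
      if_neg (by omega : ¬((0 : ℕ) = p ^ (n + c)))]
    simp
  rw [hP0] at e1 e2
  simp at e1 e2
  exact ⟨e1.symm, e2.symm⟩

theorem stmt18 (p : ℕ) (hp : p.Prime) (hodd : Odd p)
    (K : Type*) [Field K] [Algebra (ZMod p) K]
    (t : K) (ht : Transcendental (ZMod p) t)
    (n c : ℕ) (u v ε₁ ε₂ ε₃ : K)
    (hε₁ : ε₁ = 1 ∨ ε₁ = -1) (hε₂ : ε₂ = 1 ∨ ε₂ = -1) (hε₃ : ε₃ = 1 ∨ ε₃ = -1)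
    (h1 : (u + 1) * (v + 1) = ε₁ * (t + 1) ^ (p ^ n + p ^ (n + c)))
    (h2 : u * v = ε₂ * t ^ (p ^ n + p ^ (n + c)))
    (h3 : (u - 1) * (v - 1) = ε₃ * (t - 1) ^ (p ^ n + p ^ (n + c))) :
    ε₁ = 1 ∧ ε₂ = 1 ∧ ε₃ = 1 ∧
      ((u = t ^ p ^ n ∧ v = t ^ p ^ (n + c)) ∨ (u = t ^ p ^ (n + c) ∧ v = t ^ p ^ n)) := by
  haveI : Fact p.Prime := ⟨hp⟩
  haveI : CharP K p := charP_of_injective_algebraMap (algebraMap (ZMod p) K).injective p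
  have hp2 : p ≠ 2 := by rintro rfl; exact (by decide : ¬ Odd 2) hodd
  have h2ne : (2 : ZMod p) ≠ 0 := by
    intro h
    have hd : (p : ℕ) ∣ 2 := (ZMod.natCast_eq_zero_iff 2 p).mp (by exact_mod_cast h)
    exact hp2 ((Nat.prime_dvd_prime_iff_eq hp Nat.prime_two).mp hd)
  have h4ne : (4 : ZMod p) ≠ 0 := by
    intro h
    have hd : (p : ℕ) ∣ 4 := (ZMod.natCast_eq_zero_iff 4 p).mp (by exact_mod_cast h)
    have hd2 : p ∣ 2 := hp.dvd_of_dvd_pow (by rw [show (2:ℕ)^2 = 4 by norm_num]; exact hd)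
    exact hp2 ((Nat.prime_dvd_prime_iff_eq hp Nat.prime_two).mp hd2)
  have hA : (t + 1) ^ (p ^ n + p ^ (n + c)) = (t ^ p ^ n + 1) * (t ^ p ^ (n + c) + 1) := by
    rw [pow_add, add_pow_char_pow, add_pow_char_pow, one_pow, one_pow]
  have hC : (t - 1) ^ (p ^ n + p ^ (n + c)) = (t ^ p ^ n - 1) * (t ^ p ^ (n + c) - 1) := by
    rw [pow_add, sub_pow_char_pow, sub_pow_char_pow, one_pow, one_pow]
  rw [hA] at h1
  rw [hC] at h3
  have h2K : (2 : K) ≠ 0 := by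
    rw [show (2 : K) = algebraMap (ZMod p) K 2 from (map_ofNat _ 2).symm]
    exact (map_ne_zero _).mpr h2ne
  rcases hε₁ with rfl | rfl <;> rcases hε₂ with rfl | rfl <;> rcases hε₃ with rfl | rfl
  · -- (1,1,1): the good case
    have hsum : u + v = t ^ p ^ n + t ^ p ^ (n + c) :=
      mul_left_cancel₀ h2K (by linear_combination h1 - h3)
    have hprod : u * v = t ^ p ^ n * t ^ p ^ (n + c) := by
      rw [h2, one_mul, pow_add]
    have hq : (u - t ^ p ^ n) * (u - t ^ p ^ (n + c)) = 0 := by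
      linear_combination u * hsum - hprod
    refine ⟨rfl, rfl, rfl, ?_⟩
    rcases mul_eq_zero.mp hq with h | h
    · have hu : u = t ^ p ^ n := sub_eq_zero.mp h
      exact Or.inl ⟨hu, by linear_combination hsum - hu⟩
    · have hu : u = t ^ p ^ (n + c) := sub_eq_zero.mp h
      exact Or.inr ⟨hu, by linear_combination hsum - hu⟩
  · -- (1,1,-1): A = 2
    obtain ⟨hA0, -⟩ := aux18 ht n c 2 2 2 (by
      simp only [map_ofNat]
      linear_combination h1 + h3 - 2 * h2)
    exact absurd hA0 h2ne
  · -- (1,-1,1): A = -4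
    obtain ⟨hA0, -⟩ := aux18 ht n c (-4) 0 0 (by
      simp only [map_ofNat, map_neg, map_zero]
      linear_combination h1 + h3 - 2 * h2)
    exact absurd hA0 (neg_ne_zero.mpr h4ne)
  · -- (1,-1,-1): D = 2
    obtain ⟨-, hD0⟩ := aux18 ht n c (-2) 2 2 (by
      simp only [map_ofNat, map_neg]
      linear_combination h1 + h3 - 2 * h2)
    exact absurd hD0 h2ne
  · -- (-1,1,1): D = 2
    obtain ⟨-, hD0⟩ := aux18 ht n c 2 (-2) 2 (by
      simp only [map_ofNat, map_neg]
      linear_combination h1 + h3 - 2 * h2)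
    exact absurd hD0 h2ne
  · -- (-1,1,-1): A = 4
    obtain ⟨hA0, -⟩ := aux18 ht n c 4 0 4 (by
      simp only [map_ofNat, map_zero]
      linear_combination h1 + h3 - 2 * h2)
    exact absurd hA0 h4ne
  · -- (-1,-1,1): D = 2
    obtain ⟨-, hD0⟩ := aux18 ht n c (-2) (-2) 2 (by
      simp only [map_ofNat, map_neg]
      linear_combination h1 + h3 - 2 * h2)
    exact absurd hD0 h2ne
  · -- (-1,-1,-1): D = 4
    obtain ⟨-, hD0⟩ := aux18 ht n c 0 0 4 (by
      simp only [map_ofNat, map_zero]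
      linear_combination h1 + h3 - 2 * h2)
    exact absurd hD0 h4ne
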